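/- Let I ⊆ R be a homogeneous ideal, A = R/I with Hilbert function H(A,t) = dim_k A_t, and let d ≥ 1 be an integer such that H(A,j+1) = H(A,j)^⟨j⟩ for all j ≥ d. Write the d-binomial expansion as H(A,d) = Σ_{i=δ}^{d} C(a_i+i,i) with a_d ≥ a_{d−1} ≥ ··· ≥ a_δ ≥ 0. Then H(A,t) = Σ_{i=δ}^{d} C(t + a_i − (d−i), a_i) for every t ≥ d; in particular the Hilbert polynomial of A is P_A(z) = Σ_{i=δ}^{d} C(z + a_i − (d−i), a_i). -/

import Mathlib

open MvPolynomial

/-! ### Combinatorics of binomial expansions -/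

/-- The largest `m` with `C(m,d) ≤ c` (for `c,d ≥ 1`); the leading term `k_d`
of the `d`-binomial expansion of `c`. -/
def maxBinom (c d : ℕ) : ℕ := Nat.findGreatest (fun m => Nat.choose m d ≤ c) (c + d)

lemma one_le_choose_maxBinom {c d : ℕ} (hc : c ≠ 0) (hd : d ≠ 0) :
    1 ≤ Nat.choose (maxBinom c d) d := by
  have h : d ≤ maxBinom c d :=
    Nat.le_findGreatest (Nat.le_add_left d c)
      (by simpa [Nat.choose_self] using Nat.one_le_iff_ne_zero.mpr hc)
  exact Nat.choose_pos h

/-- Macaulay's function `c ↦ c^⟨d⟩`: if `c = C(k_d,d) + C(k_{d-1},d-1) + ⋯ + C(k_δ,δ)`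
is the `d`-binomial expansion of `c`, then
`macaulayFun c d = C(k_d+1,d+1) + ⋯ + C(k_δ+1,δ+1)`; and `0^⟨d⟩ = c^⟨0⟩ = 0`. -/
def macaulayFun (c d : ℕ) : ℕ :=
  if h : c = 0 ∨ d = 0 then 0
  else
    Nat.choose (maxBinom c d + 1) (d + 1) +
      macaulayFun (c - Nat.choose (maxBinom c d) d) (d - 1)
termination_by c
decreasing_by
  push_neg at h
  have h1 := one_le_choose_maxBinom h.1 h.2
  have h2 := Nat.pos_of_ne_zero h.1
  omega

/-- Green's function `c ↦ c_⟨d⟩`: if `c = C(k_d,d) + C(k_{d-1},d-1) + ⋯ + C(k_δ,δ)`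
is the `d`-binomial expansion of `c`, then
`greenFun c d = C(k_d-1,d) + ⋯ + C(k_δ-1,δ)` (with `C(i,j) = 0` for `i < j`);
and `0_⟨d⟩ = c_⟨0⟩ = 0`. -/
def greenFun (c d : ℕ) : ℕ :=
  if h : c = 0 ∨ d = 0 then 0
  else
    Nat.choose (maxBinom c d - 1) d +
      greenFun (c - Nat.choose (maxBinom c d) d) (d - 1)
termination_by c
decreasing_by
  push_neg at h
  have h1 := one_le_choose_maxBinom h.1 h.2
  have h2 := Nat.pos_of_ne_zero h.1
  omega

/-- The list `[k_d, k_{d-1}, …, k_δ]` of the `d`-binomial expansion of `c`. -/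
def binExpand (c d : ℕ) : List ℕ :=
  if h : c = 0 ∨ d = 0 then []
  else maxBinom c d :: binExpand (c - Nat.choose (maxBinom c d) d) (d - 1)
termination_by c
decreasing_by
  push_neg at h
  have h1 := one_le_choose_maxBinom h.1 h.2
  have h2 := Nat.pos_of_ne_zero h.1
  omega

/-- The Macaulay difference list `(a_d, a_{d-1}, …, a_δ)` of `c` in degree `d`,
where `a_i = k_i - i` for the `d`-binomial expansion `c = Σ C(k_i, i)`. -/
def diffList (c d : ℕ) : List ℕ :=
  List.zipWith (fun m i => m - i) (binExpand c d) ((List.range (d + 1)).reverse)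

/-- `gotzmannCoeffAux c d ℓ` is the number of entries of the Macaulay difference list
of `c` in degree `d` which are equal to `ℓ`; for `c = H_X(d)` this is `C_ℓ(X,d)`. -/
def gotzmannCoeffAux (c d ℓ : ℕ) : ℕ := (diffList c d).count ℓ

/-! ### Hilbert functions of subschemes of projective space -/

/-- The homogeneous coordinate ring `R = k[x_0,…,x_n]` of `ℙⁿ`. -/
abbrev PR (k : Type) [Field k] (n : ℕ) := MvPolynomial (Fin (n + 1)) k

/-- The degree-`d` graded component of an ideal `I ⊆ k[x_0,…,x_n]`,
as a `k`-subspace of the polynomial ring. -/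
noncomputable def idealComp {k : Type} [Field k] {n : ℕ} (I : Ideal (PR k n)) (d : ℕ) :
    Submodule k (PR k n) :=
  Submodule.restrictScalars k I ⊓ homogeneousSubmodule (Fin (n + 1)) k d

/-- The Hilbert function of `R/I`: `hilb I d = dim_k R_d - dim_k I_d`. -/
noncomputable def hilb {k : Type} [Field k] {n : ℕ} (I : Ideal (PR k n)) (d : ℕ) : ℕ :=
  Module.finrank k (homogeneousSubmodule (Fin (n + 1)) k d) -
    Module.finrank k (idealComp I d)

/-- First difference `ΔH(d) = H(d) - H(d-1)` of the Hilbert function of `R/I`. -/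
noncomputable def deltaH {k : Type} [Field k] {n : ℕ} (I : Ideal (PR k n)) (d : ℕ) : ℕ :=
  hilb I d - hilb I (d - 1)

/-- An ideal is homogeneous if it contains all homogeneous components of its elements. -/
def IsHomog {k : Type} [Field k] {n : ℕ} (I : Ideal (PR k n)) : Prop :=
  ∀ f ∈ I, ∀ d : ℕ, MvPolynomial.homogeneousComponent d f ∈ I

/-- The irrelevant maximal ideal `(x_0, …, x_n)`. -/
noncomputable def irrel (k : Type) [Field k] (n : ℕ) : Ideal (PR k n) :=
  Ideal.span (Set.range MvPolynomial.X)

/-- The saturation `I^sat = ⋃_m (I : (x_0,…,x_n)^m)` of an ideal `I`. -/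
noncomputable def satur {k : Type} [Field k] {n : ℕ} (I : Ideal (PR k n)) : Ideal (PR k n) :=
  ⨆ m : ℕ, Submodule.colon I ((irrel k n ^ m : Ideal (PR k n)) : Set (PR k n))

/-- The saturation degree `sat(I)`: the least `r` with `I_j = (I^sat)_j` for all `j ≥ r`. -/
noncomputable def satDeg {k : Type} [Field k] {n : ℕ} (I : Ideal (PR k n)) : ℕ :=
  sInf {r : ℕ | ∀ j ≥ r, idealComp I j = idealComp (satur I) j}

/-- The Gotzmann number (persistence index) `G`: the least `d ≥ 1` such that the Hilbert
function of `R/I` has maximal growth `H(t+1) = H(t)^⟨t⟩` in every degree `t ≥ d`. -/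
noncomputable def Gnum {k : Type} [Field k] {n : ℕ} (I : Ideal (PR k n)) : ℕ :=
  sInf {d : ℕ | 1 ≤ d ∧ ∀ t ≥ d, hilb I (t + 1) = macaulayFun (hilb I t) t}

/-- The invariant `M`: the least `d ≥ 1` such that equality `ΔH(t) = H(t)_⟨t⟩`
in Green's Hyperplane Restriction Theorem holds for every degree `t ≥ d`. -/
noncomputable def Mnum {k : Type} [Field k] {n : ℕ} (I : Ideal (PR k n)) : ℕ :=
  sInf {d : ℕ | 1 ≤ d ∧ ∀ t ≥ d, deltaH I t = greenFun (hilb I t) t}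

/-- The `ℓ`-th Gotzmann coefficient `C_ℓ(X)` of the subscheme defined by `I`: the number of
entries equal to `ℓ` in the (stable) Macaulay difference list of `H_X(d)`, `d ≥ G(X)`. -/
noncomputable def gotzmannCoeff {k : Type} [Field k] {n : ℕ} (I : Ideal (PR k n)) (ℓ : ℕ) : ℕ :=
  gotzmannCoeffAux (hilb I (Gnum I + 1)) (Gnum I + 1) ℓ

/-- `X` is a hypersurface in a linear subspace of `ℙⁿ`:
`I_X = (L_1,…,L_c,F)` for linearly independent linear forms `L_i` and a form `F` of
positive degree which is a nonzerodivisor modulo `(L_1,…,L_c)`. -/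
def IsHypersurfaceInLinearSubspace {k : Type} [Field k] {n : ℕ} (I : Ideal (PR k n)) : Prop :=
  ∃ (c : ℕ) (L : Fin c → PR k n) (F : PR k n) (e : ℕ),
    (∀ i, (L i).IsHomogeneous 1) ∧ LinearIndependent k L ∧
    0 < e ∧ F.IsHomogeneous e ∧
    (∀ g : PR k n, F * g ∈ Ideal.span (Set.range L) → g ∈ Ideal.span (Set.range L)) ∧
    I = Ideal.span (Set.range L ∪ {F})

/-- Equidimensionality: all minimal primes of `I` have quotient of the same Krull dimension. -/
def IsEquidim {k : Type} [Field k] {n : ℕ} (I : Ideal (PR k n)) : Prop :=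
  ∀ p ∈ I.minimalPrimes, ∀ q ∈ I.minimalPrimes,
    ringKrullDim (PR k n ⧸ p) = ringKrullDim (PR k n ⧸ q)

/-- The (affine cone) vanishing ideal of a subset of `k^{n+1}`. -/
def vanishIdeal {k : Type} [Field k] {n : ℕ} (S : Set (Fin (n + 1) → k)) : Ideal (PR k n) where
  carrier := {f | ∀ x ∈ S, MvPolynomial.eval x f = 0}
  add_mem' := by
    intro f g hf hg x hx
    simp [map_add, hf x hx, hg x hx]
  zero_mem' := by intro x hx; simp
  smul_mem' := by
    intro c f hf x hx
    simp [smul_eq_mul, hf x hx]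

/-- The affine cone over the (finite) set of points of `ℙⁿ` with homogeneous
coordinate vectors `v j`. -/
def coneOver {k : Type} [Field k] {n : ℕ} {s : ℕ} (v : Fin s → (Fin (n + 1) → k))
    (T : Set (Fin s)) : Set (Fin (n + 1) → k) :=
  {x | ∃ j ∈ T, ∃ t : k, x = t • v j}

/-- The linear form with coefficient vector `v`. -/
noncomputable def linForm {k : Type} [Field k] {n : ℕ} (v : Fin (n + 1) → k) : PR k n :=
  ∑ j, MvPolynomial.C (v j) * MvPolynomial.X j

/-- `GenericProp k n ℓ Q` : the property `Q` holds for all tuples of `ℓ` (coefficient vectors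
of) linear forms in a suitable nonempty Zariski-open subset of `(R_1)^ℓ`, i.e. on a nonempty
basic open set: the nonvanishing locus of a nonzero polynomial in the coefficients. -/
def GenericProp (k : Type) [Field k] (n ℓ : ℕ) (Q : (Fin ℓ → Fin (n + 1) → k) → Prop) : Prop :=
  ∃ F : MvPolynomial (Fin ℓ × Fin (n + 1)) k, F ≠ 0 ∧
    ∀ M : Fin ℓ → Fin (n + 1) → k, MvPolynomial.eval (fun p => M p.1 p.2) F ≠ 0 → Q M

/-- Castelnuovo–Mumford regularity bound `reg(I) ≤ m`, via the Bayer–Stillman criterion: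
there are linear forms `h_1, …, h_j` such that
`((I + (h_1,…,h_{i-1})) : h_i)_t = (I + (h_1,…,h_{i-1}))_t` for all `t ≥ m` and all `i`, and
`(I + (h_1,…,h_j))_t = R_t` for all `t ≥ m`. -/
def RegLE {k : Type} [Field k] {n : ℕ} (I : Ideal (PR k n)) (m : ℕ) : Prop :=
  ∃ (j : ℕ) (h : Fin j → PR k n),
    (∀ i, (h i).IsHomogeneous 1) ∧
    (∀ i : Fin j, ∀ t, m ≤ t →
      idealComp (Submodule.colon (I ⊔ Ideal.span (h '' {i' | i' < i})) (Ideal.span {h i})) t =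
        idealComp (I ⊔ Ideal.span (h '' {i' | i' < i})) t) ∧
    (∀ t, m ≤ t →
      idealComp (I ⊔ Ideal.span (Set.range h)) t = homogeneousSubmodule (Fin (n + 1)) k t)


/-! ### Auxiliary lemmas -/

lemma maxBinom_eq' (c m r : ℕ) (hr : 1 ≤ r) (hrm : r ≤ m)
    (h1 : Nat.choose m r ≤ c) (h2 : c < Nat.choose (m + 1) r) : maxBinom c r = m := by
  have hcm : m - r + 1 ≤ Nat.choose m r := by
    calc m - r + 1 = Nat.choose (m - r + 1) (m - r) := (Nat.choose_succ_self_right _).symm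
    _ ≤ Nat.choose m (m - r) := Nat.choose_le_choose _ (by omega)
    _ = Nat.choose m r := Nat.choose_symm hrm
  unfold maxBinom
  rw [Nat.findGreatest_eq_iff]
  exact ⟨by omega, fun _ => h1,
    fun nn hn _ hP => absurd hP (not_le.mpr (lt_of_lt_of_le h2 (Nat.choose_le_choose _ hn)))⟩

lemma sum_choose_Icc_one (A m : ℕ) :
    ∑ j ∈ Finset.Icc 1 m, Nat.choose (A + j) j = Nat.choose (A + m + 1) (A + 1) - 1 := by
  induction m with
  | zero => simp
  | succ m ih =>
    rw [Finset.sum_Icc_succ_top (by omega : 1 ≤ m + 1), ih]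
    have hs : Nat.choose (A + (m + 1)) (m + 1) = Nat.choose (A + (m + 1)) A := by
      rw [← Nat.choose_symm (by omega : m + 1 ≤ A + (m + 1))]
      congr 1; omega
    have hp : Nat.choose (A + (m + 1) + 1) (A + 1)
        = Nat.choose (A + (m + 1)) A + Nat.choose (A + (m + 1)) (A + 1) :=
      Nat.choose_succ_succ (A + (m + 1)) A
    have hpos : 1 ≤ Nat.choose (A + m + 1) (A + 1) := Nat.choose_pos (by omega)
    rw [show A + (m + 1) = A + m + 1 from by omega] at hs hp ⊢
    omega

lemma sum_lt_choose (δ d s : ℕ) (hδ : 1 ≤ δ) (hδd : δ ≤ d) (a : ℕ → ℕ)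
    (hA : ∀ i ∈ Finset.Icc δ d, a i ≤ a d) :
    ∑ i ∈ Finset.Icc δ d, Nat.choose (a i + (i + s)) (i + s)
      < Nat.choose (a d + (d + s) + 1) (d + s) := by
  set A := a d with hAd
  have step1 : ∑ i ∈ Finset.Icc δ d, Nat.choose (a i + (i + s)) (i + s)
      ≤ ∑ i ∈ Finset.Icc δ d, Nat.choose (A + (i + s)) (i + s) :=
    Finset.sum_le_sum fun i hi => Nat.choose_le_choose _ (by have := hA i hi; omega)
  have step2 : ∑ i ∈ Finset.Icc δ d, Nat.choose (A + (i + s)) (i + s)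
      ≤ ∑ j ∈ Finset.Icc 1 (d + s), Nat.choose (A + j) j := by
    have hmap : ∑ i ∈ Finset.Icc δ d, Nat.choose (A + (i + s)) (i + s)
        = ∑ j ∈ Finset.Icc (δ + s) (d + s), Nat.choose (A + j) j := by
      rw [← Finset.map_add_right_Icc, Finset.sum_map]
      rfl
    rw [hmap]
    exact Finset.sum_le_sum_of_subset (Finset.Icc_subset_Icc (by omega) le_rfl)
  have hsym : Nat.choose (A + (d + s) + 1) (A + 1) = Nat.choose (A + (d + s) + 1) (d + s) := by
    rw [← Nat.choose_symm (by omega : d + s ≤ A + (d + s) + 1)]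
    congr 1; omega
  have hpos : 1 ≤ Nat.choose (A + (d + s) + 1) (d + s) := Nat.choose_pos (by omega)
  calc ∑ i ∈ Finset.Icc δ d, Nat.choose (a i + (i + s)) (i + s)
      ≤ ∑ j ∈ Finset.Icc 1 (d + s), Nat.choose (A + j) j := le_trans step1 step2
    _ = Nat.choose (A + (d + s) + 1) (A + 1) - 1 := sum_choose_Icc_one A (d + s)
    _ < Nat.choose (A + (d + s) + 1) (d + s) := by omega

lemma macaulay_step (δ d s : ℕ) (hδ : 1 ≤ δ) (hδd : δ ≤ d) (a : ℕ → ℕ)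
    (hA : ∀ i ∈ Finset.Icc δ d, a i ≤ a d) :
    macaulayFun (∑ i ∈ Finset.Icc δ d, Nat.choose (a i + (i + s)) (i + s)) (d + s) =
      Nat.choose (a d + (d + s) + 1) (d + s + 1) +
      macaulayFun ((∑ i ∈ Finset.Icc δ d, Nat.choose (a i + (i + s)) (i + s))
          - Nat.choose (a d + (d + s)) (d + s)) (d + s - 1) := by
  set c := ∑ i ∈ Finset.Icc δ d, Nat.choose (a i + (i + s)) (i + s) with hc
  have h1 : Nat.choose (a d + (d + s)) (d + s) ≤ c :=
    Finset.single_le_sum (f := fun i => Nat.choose (a i + (i + s)) (i + s))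
      (fun i _ => Nat.zero_le _) (Finset.mem_Icc.mpr ⟨hδd, le_rfl⟩)
  have hpos : 0 < Nat.choose (a d + (d + s)) (d + s) := Nat.choose_pos (by omega)
  have hc0 : c ≠ 0 := by omega
  have hmb : maxBinom c (d + s) = a d + (d + s) :=
    maxBinom_eq' c (a d + (d + s)) (d + s) (by omega) (by omega) h1
      (by simpa using sum_lt_choose δ d s hδ hδd a hA)
  rw [macaulayFun, dif_neg (by push_neg; exact ⟨hc0, by omega⟩), hmb]

lemma macaulay_sum (δ : ℕ) (hδ : 1 ≤ δ) (d : ℕ) (hd : δ ≤ d) :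
    ∀ (s : ℕ) (a : ℕ → ℕ), MonotoneOn a (Set.Icc δ d) →
    macaulayFun (∑ i ∈ Finset.Icc δ d, Nat.choose (a i + (i + s)) (i + s)) (d + s) =
      ∑ i ∈ Finset.Icc δ d, Nat.choose (a i + (i + s) + 1) (i + s + 1) := by
  induction d, hd using Nat.le_induction with
  | base =>
    intro s a _
    rw [macaulay_step δ δ s hδ le_rfl a
      (fun i hi => by
        have h := Finset.mem_Icc.mp hi
        have hie : i = δ := le_antisymm h.2 h.1
        subst hie
        exact le_rfl)]
    rw [Finset.Icc_self, Finset.sum_singleton, Nat.sub_self]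
    rw [macaulayFun, dif_pos (Or.inl rfl)]
    simp
  | succ d hd ih =>
    intro s a hmono
    have hA : ∀ i ∈ Finset.Icc δ (d + 1), a i ≤ a (d + 1) := by
      intro i hi
      rw [Finset.mem_Icc] at hi
      exact hmono (Set.mem_Icc.mpr hi) (Set.mem_Icc.mpr ⟨by omega, le_rfl⟩) hi.2
    rw [macaulay_step δ (d + 1) s hδ (by omega) a hA]
    have hrem : (∑ i ∈ Finset.Icc δ (d + 1), Nat.choose (a i + (i + s)) (i + s))
        - Nat.choose (a (d + 1) + (d + 1 + s)) (d + 1 + s)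
        = ∑ i ∈ Finset.Icc δ d, Nat.choose (a i + (i + s)) (i + s) := by
      rw [Finset.sum_Icc_succ_top (by omega : δ ≤ d + 1)]
      omega
    rw [hrem, show d + 1 + s - 1 = d + s from by omega,
      ih s a (hmono.mono (Set.Icc_subset_Icc le_rfl (by omega)))]
    rw [Finset.sum_Icc_succ_top (by omega : δ ≤ d + 1)]
    omega

/-- Let `I ⊆ R` be a homogeneous ideal, `A = R/I`, and `d ≥ 1` with
`H(A,j+1) = H(A,j)^⟨j⟩` for all `j ≥ d`. Writing the `d`-binomial expansion
`H(A,d) = Σ_{i=δ}^d C(a_i+i,i)` with `a_d ≥ ⋯ ≥ a_δ ≥ 0`, one has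
`H(A,t) = Σ_{i=δ}^d C(t + a_i − (d−i), a_i)` for every `t ≥ d`; in particular the
Hilbert polynomial of `A` is `P_A(z) = Σ_{i=δ}^d C(z + a_i − (d−i), a_i)`. -/
theorem hilb_eq_of_maximal_growth {k : Type} [Field k] {n : ℕ}
    (I : Ideal (PR k n)) (hhom : IsHomog I)
    (d δ : ℕ) (hd : 1 ≤ d) (hδ1 : 1 ≤ δ) (hδd : δ ≤ d)
    (hmax : ∀ j, d ≤ j → hilb I (j + 1) = macaulayFun (hilb I j) j)
    (a : ℕ → ℕ) (hmono : MonotoneOn a (Set.Icc δ d))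
    (hexp : hilb I d = ∑ i ∈ Finset.Icc δ d, Nat.choose (a i + i) i) :
    ∀ t, d ≤ t →
      hilb I t = ∑ i ∈ Finset.Icc δ d, Nat.choose (t + a i - (d - i)) (a i) := by
  intro t ht
  obtain ⟨s, rfl⟩ : ∃ s, t = d + s := ⟨t - d, by omega⟩
  have main : ∀ s, hilb I (d + s) = ∑ i ∈ Finset.Icc δ d, Nat.choose (a i + (i + s)) (i + s) := by
    intro s
    induction s with
    | zero => simpa using hexp
    | succ s ih =>
      rw [show d + (s + 1) = (d + s) + 1 from rfl, hmax (d + s) (by omega), ih,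
        macaulay_sum δ hδ1 d hδd s a hmono]
      apply Finset.sum_congr rfl
      intro i _
      congr 1 <;> omega
  rw [main s]
  apply Finset.sum_congr rfl
  intro i hi
  rw [Finset.mem_Icc] at hi
  rw [show d + s + a i - (d - i) = a i + (i + s) from by omega]
  rw [← Nat.choose_symm (show a i ≤ a i + (i + s) by omega)]
  congr 1
  omega
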